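/- Let X be a Polish space and 2 ≤ k ≤ N. For every (x_1,…,x_N) ∈ X^N, setting μ_k := M_k S_N δ_{(x_1,…,x_N)} and λ := (1/N) Σ_{i=1}^N δ_{x_i}, one has the total variation bound ‖ ( ∏_{j=1}^{k−1}(N−j) / N^{k−1} ) · μ_k − λ^{⊗k} ‖_TV ≤ C_k / N, where C_k := Σ_{j=1}^{k−1} c_j^{(k)} and c_j^{(k)} := Σ_{1 ≤ i_1 < ⋯ < i_j ≤ k−1} i_1 · i_2 ⋯ i_j is the j-th elementary symmetric polynomial of 1, 2, …, k−1; in particular C_k is independent of N and of X. -/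

import Mathlib

open MeasureTheory Filter Topology ENNReal

noncomputable section

namespace FiniteDeFinetti

variable {X : Type*}

/-- The symmetrization `S_N γ := (1/N!) ∑_{σ ∈ S_N} γ^σ` of a measure on `X^N`,
where `γ^σ` is the pushforward of `γ` under the coordinate permutation induced by `σ`. -/
def symmetrize [MeasurableSpace X] (N : ℕ) (γ : Measure (Fin N → X)) :
    Measure (Fin N → X) :=
  (N.factorial : ℝ≥0∞)⁻¹ • ∑ σ : Equiv.Perm (Fin N), γ.map (fun x i => x (σ i))

/-- The `k`-point marginal `M_k γ` of a measure on `X^N` (projection on the first `k` coords). -/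
def marginal [MeasurableSpace X] {k N : ℕ} (h : k ≤ N) (γ : Measure (Fin N → X)) :
    Measure (Fin k → X) :=
  γ.map (fun x i => x (Fin.castLE h i))

/-- `𝒫_sym(X^N)`: symmetric probability measures on `X^N`. -/
def PsymSet [MeasurableSpace X] (N : ℕ) : Set (Measure (Fin N → X)) :=
  {γ | IsProbabilityMeasure γ ∧ γ = symmetrize N γ}

/-- `𝒫_{N-rep}(X^k)`: the `N`-representable `k`-plans. -/
def NRep [MeasurableSpace X] {k N : ℕ} (h : k ≤ N) : Set (Measure (Fin k → X)) :=
  {μ | ∃ γ : Measure (Fin N → X), γ ∈ PsymSet N ∧ μ = marginal h γ}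

/-- Narrow (weak) convergence of a sequence of measures: convergence of integrals of all
bounded continuous functions. -/
def NarrowTendsto {Y : Type*} [MeasurableSpace Y] [TopologicalSpace Y]
    (μs : ℕ → Measure Y) (μ : Measure Y) : Prop :=
  ∀ φ : BoundedContinuousFunction Y ℝ,
    Tendsto (fun n => ∫ y, φ y ∂(μs n)) atTop (𝓝 (∫ y, φ y ∂μ))

/-- The empirical measure `(1/N) ∑ δ_{x_i}`. -/
def empirical [MeasurableSpace X] (N : ℕ) (x : Fin N → X) : Measure X :=
  (N : ℝ≥0∞)⁻¹ • ∑ i, Measure.dirac (x i)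

/-- Extreme point of a convex set of measures. -/
def IsExtremePt {Y : Type*} [MeasurableSpace Y] (C : Set (Measure Y)) (μ : Measure Y) : Prop :=
  μ ∈ C ∧ ∀ μ1 ∈ C, ∀ μ2 ∈ C, ∀ t : ℝ≥0∞, 0 < t → t < 1 →
    μ = t • μ1 + (1 - t) • μ2 → μ1 = μ ∧ μ2 = μ

/-- The set `E_{N,k}` of marginals of symmetrized Dirac measures. -/
def ENk [MeasurableSpace X] {k N : ℕ} (h : k ≤ N) : Set (Measure (Fin k → X)) :=
  {μ | ∃ x : Fin N → X, μ = marginal h (symmetrize N (Measure.dirac x))}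

/-- Borel σ-algebra on the space of probability measures with its narrow topology. -/
instance instMSPM {Y : Type*} [MeasurableSpace Y] [TopologicalSpace Y]
    [OpensMeasurableSpace Y] : MeasurableSpace (ProbabilityMeasure Y) := borel _

lemma empirical_isProbabilityMeasure [MeasurableSpace X] {N : ℕ} (hN : 0 < N) (x : Fin N → X) :
    IsProbabilityMeasure (empirical N x) := by
  constructor
  simp only [empirical, Measure.smul_apply, smul_eq_mul]
  rw [Measure.finset_sum_apply]
  simp only [measure_univ, Finset.sum_const, Finset.card_univ, Fintype.card_fin, nsmul_eq_mul,
    mul_one]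
  exact ENNReal.inv_mul_cancel (by exact_mod_cast hN.ne') (natCast_ne_top N)

/-- The empirical-measure map `Λ : X^N → 𝒫(X)`. -/
def empPM [MeasurableSpace X] {N : ℕ} (hN : 0 < N) (x : Fin N → X) : ProbabilityMeasure X :=
  ⟨empirical N x, empirical_isProbabilityMeasure hN x⟩

/-- The set `𝒫_{1/N}(X)` of `1/N`-quantized probability measures (as probability measures). -/
def QuantizedPM [MeasurableSpace X] (N : ℕ) : Set (ProbabilityMeasure X) :=
  {lam | ∃ x : Fin N → X, (lam : Measure X) = empirical N x}

open Classical in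
/-- The extremal `N`-representable `k`-plan `F_{N,k}(λ)` associated with a `1/N`-quantized
probability measure `λ = (1/N) ∑ δ_{x_i}`, namely `M_k S_N δ_{(x_1,…,x_N)}` (this does not
depend on the chosen enumeration of the atoms of `λ` counted with multiplicity); junk value
`λ^{⊗k}` for non-quantized `λ`. -/
def FNk [MeasurableSpace X] {k N : ℕ} (h : k ≤ N) (lam : ProbabilityMeasure X) :
    Measure (Fin k → X) :=
  if hx : ∃ x : Fin N → X, (lam : Measure X) = empirical N x then
    marginal h (symmetrize N (Measure.dirac (Classical.choose hx)))
  else Measure.pi fun _ => (lam : Measure X)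



section Aux

open Finset

/-- Fiber counting: at most `(N-k)!` permutations restrict to a given map on `Fin k`. -/
lemma fiber_card_le {k N : ℕ} (hkN : k ≤ N) (b : Fin k → Fin N) :
    (Finset.univ.filter fun σ : Equiv.Perm (Fin N) =>
        (fun i => σ (Fin.castLE hkN i)) = b).card ≤ (N - k).factorial := by
  classical
  set s := Finset.univ.filter fun σ : Equiv.Perm (Fin N) =>
      (fun i => σ (Fin.castLE hkN i)) = b with hs
  rcases s.eq_empty_or_nonempty with h | ⟨σ₀, hσ₀⟩
  · simp [h]
  · rw [hs, mem_filter] at hσ₀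
    have hb : ∀ i : Fin k, σ₀ (Fin.castLE hkN i) = b i := fun i => congrFun hσ₀.2 i
    have hfix : ∀ σ ∈ s, ∀ i : Fin k, (σ₀⁻¹ * σ) (Fin.castLE hkN i) = Fin.castLE hkN i := by
      intro σ hσ i
      rw [hs, mem_filter] at hσ
      have : σ (Fin.castLE hkN i) = b i := congrFun hσ.2 i
      simp [Equiv.Perm.mul_apply, this, ← hb i]
    have hsmall : ∀ σ ∈ s, ∀ j : Fin N, (j : ℕ) < k → (σ₀⁻¹ * σ) j = j := by
      intro σ hσ j hj
      have := hfix σ hσ ⟨j, hj⟩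
      simpa [Fin.castLE] using this
    have hiff : ∀ σ ∈ s, ∀ j : Fin N, ¬((j:ℕ) < k) ↔ ¬(((σ₀⁻¹ * σ) j : ℕ) < k) := by
      intro σ hσ j
      constructor
      · intro hj hc
        apply hj
        have h1 : (σ₀⁻¹ * σ) ((σ₀⁻¹ * σ) j) = (σ₀⁻¹ * σ) j := hsmall σ hσ _ hc
        have := (σ₀⁻¹ * σ).injective h1
        rwa [this] at hc
      · intro hj hc
        exact hj (by rw [hsmall σ hσ j hc]; exact hc)
    have hinj : Set.InjOn
        (fun σ : Equiv.Perm (Fin N) =>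
          if hσ : σ ∈ s then
            Equiv.Perm.subtypePerm (p := fun j : Fin N => ¬((j:ℕ) < k)) (σ₀⁻¹ * σ)
              (fun j => (hiff σ hσ j).symm)
          else 1) s := by
      intro σ1 h1 σ2 h2 heq
      have h1' : σ1 ∈ s := h1
      have h2' : σ2 ∈ s := h2
      simp only [dif_pos h1', dif_pos h2'] at heq
      have : σ₀⁻¹ * σ1 = σ₀⁻¹ * σ2 := by
        apply Equiv.ext
        intro j
        by_cases hj : (j : ℕ) < k
        · rw [hsmall σ1 h1 j hj, hsmall σ2 h2 j hj]
        · exact congrArg Subtype.val (DFunLike.congr_fun heq ⟨j, hj⟩)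
      exact mul_left_cancel this
    calc s.card ≤ (Finset.univ : Finset (Equiv.Perm {j : Fin N // ¬((j:ℕ) < k)})).card :=
          Finset.card_le_card_of_injOn _ (fun _ _ => Finset.mem_univ _) hinj
      _ = (N - k).factorial := by
          rw [Finset.card_univ, Fintype.card_perm]
          congr 1
          have e : {j : Fin N // (j:ℕ) < k} ≃ Fin k :=
            { toFun := fun j => ⟨j.1.1, j.2⟩
              invFun := fun i => ⟨⟨i.1, lt_of_lt_of_le i.2 hkN⟩, i.2⟩
              left_inv := fun j => by ext; rfl
              right_inv := fun i => rfl }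
          rw [Fintype.card_subtype_compl, Fintype.card_congr e, Fintype.card_fin,
            Fintype.card_fin]

lemma sum_perm_le {k N : ℕ} (hkN : k ≤ N) (g : (Fin k → Fin N) → ℝ) (hg : ∀ f, 0 ≤ g f) :
    ∑ σ : Equiv.Perm (Fin N), g (fun i => σ (Fin.castLE hkN i)) ≤
      ((N - k).factorial : ℝ) * ∑ f : Fin k → Fin N, g f := by
  classical
  rw [Finset.sum_comp g (fun σ : Equiv.Perm (Fin N) => fun i => σ (Fin.castLE hkN i))]
  calc ∑ b ∈ Finset.univ.image (fun σ : Equiv.Perm (Fin N) => fun i => σ (Fin.castLE hkN i)),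
        (Finset.univ.filter fun σ : Equiv.Perm (Fin N) =>
          (fun i => σ (Fin.castLE hkN i)) = b).card • g b
      ≤ ∑ b ∈ Finset.univ.image (fun σ : Equiv.Perm (Fin N) => fun i => σ (Fin.castLE hkN i)),
        ((N - k).factorial : ℝ) * g b := by
        apply Finset.sum_le_sum
        intro b _
        rw [nsmul_eq_mul]
        exact mul_le_mul_of_nonneg_right (by exact_mod_cast fiber_card_le hkN b) (hg b)
    _ ≤ ∑ b : Fin k → Fin N, ((N - k).factorial : ℝ) * g b := by
        apply Finset.sum_le_sum_of_subset_of_nonneg (Finset.subset_univ _)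
        intro b _ _
        exact mul_nonneg (Nat.cast_nonneg _) (hg b)
    _ = ((N - k).factorial : ℝ) * ∑ f : Fin k → Fin N, g f := by
        rw [Finset.mul_sum]

lemma prod_bound {k N : ℕ} (hk : 2 ≤ k) (hkN : k ≤ N) :
    1 - (∏ j ∈ Icc 1 (k-1), ((N:ℝ) - (j:ℝ))) / (N:ℝ)^(k-1) ≤
      (∑ j ∈ Icc 1 (k-1), ∑ s ∈ powersetCard j (Icc 1 (k-1)), ∏ i ∈ s, (i:ℝ)) / (N:ℝ) := by
  classical
  set s : Finset ℕ := Icc 1 (k-1) with hsdef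
  have hcs : s.card = k - 1 := by rw [hsdef, Nat.card_Icc]; omega
  set C : ℝ := ∑ j ∈ Icc 1 (k-1), ∑ t ∈ powersetCard j s, ∏ i ∈ t, (i:ℝ) with hC
  have hN1 : (1:ℝ) ≤ (N:ℝ) := by exact_mod_cast Nat.one_le_iff_ne_zero.mpr (by omega)
  have hNpos : (0:ℝ) < (N:ℝ) := by linarith
  have hQpos : (0:ℝ) < (N:ℝ)^(k-1) := pow_pos hNpos _
  have hexp : ∏ j ∈ s, ((N:ℝ) - (j:ℝ)) =
      ∑ t ∈ s.powerset, (∏ i ∈ t, (-(i:ℝ))) * (N:ℝ) ^ (s \ t).card := by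
    rw [show (∏ j ∈ s, ((N:ℝ) - (j:ℝ))) = ∏ j ∈ s, ((-(j:ℝ)) + (N:ℝ)) by
      apply Finset.prod_congr rfl; intros; ring]
    rw [Finset.prod_add]
    exact Finset.sum_congr rfl fun t _ => by rw [Finset.prod_const]
  have hEmp : ∅ ∈ s.powerset := Finset.empty_mem_powerset s
  have hsplit : ∑ t ∈ s.powerset, (∏ i ∈ t, (-(i:ℝ))) * (N:ℝ) ^ (s \ t).card =
      (N:ℝ)^(k-1) + ∑ t ∈ s.powerset.erase ∅, (∏ i ∈ t, (-(i:ℝ))) * (N:ℝ) ^ (s \ t).card := by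
    rw [← Finset.add_sum_erase _ _ hEmp]
    congr 1
    simp [hcs]
  have hrem : ∀ t ∈ s.powerset.erase ∅,
      -((∏ i ∈ t, (-(i:ℝ))) * (N:ℝ) ^ (s \ t).card) ≤ (∏ i ∈ t, (i:ℝ)) * (N:ℝ)^(k-2) := by
    intro t ht
    rw [Finset.mem_erase, Finset.mem_powerset] at ht
    have ht1 : 1 ≤ t.card := Finset.card_pos.mpr (Finset.nonempty_of_ne_empty ht.1)
    have hcard : (s \ t).card ≤ k - 2 := by
      rw [Finset.card_sdiff_of_subset ht.2, hcs]; omega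
    have h1 : -((∏ i ∈ t, (-(i:ℝ))) * (N:ℝ) ^ (s \ t).card) ≤
        |(∏ i ∈ t, (-(i:ℝ))) * (N:ℝ) ^ (s \ t).card| := neg_le_abs _
    have h2 : |(∏ i ∈ t, (-(i:ℝ))) * (N:ℝ) ^ (s \ t).card| =
        (∏ i ∈ t, (i:ℝ)) * (N:ℝ) ^ (s \ t).card := by
      rw [abs_mul, Finset.abs_prod, abs_of_pos (pow_pos hNpos _)]
      congr 1
      exact Finset.prod_congr rfl fun i _ => by rw [abs_neg, abs_of_nonneg (Nat.cast_nonneg i)]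
    have h3 : (∏ i ∈ t, (i:ℝ)) * (N:ℝ) ^ (s \ t).card ≤ (∏ i ∈ t, (i:ℝ)) * (N:ℝ)^(k-2) := by
      apply mul_le_mul_of_nonneg_left (pow_le_pow_right₀ hN1 hcard)
      exact Finset.prod_nonneg fun i _ => Nat.cast_nonneg i
    linarith
  have hCsum : ∑ t ∈ s.powerset.erase ∅, ∏ i ∈ t, (i:ℝ) = C := by
    have hps : ∑ t ∈ s.powerset, ∏ i ∈ t, (i:ℝ) = 1 + C := by
      rw [Finset.sum_powerset, hcs, hC]
      rw [Finset.sum_range_succ']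
      rw [add_comm]
      congr 1
      · rw [Finset.powersetCard_zero, Finset.sum_singleton, Finset.prod_empty]
      · rw [show Icc 1 (k-1) = Ico 1 ((k-1)+1) from (Finset.Ico_add_one_right_eq_Icc 1 (k-1)).symm,
          Finset.sum_Ico_eq_sum_range]
        apply Finset.sum_congr (by congr 1) fun i _ => by rw [add_comm]
    have := Finset.add_sum_erase s.powerset (fun t => ∏ i ∈ t, (i:ℝ)) hEmp
    simp only [Finset.prod_empty] at this
    linarith [hps, this]
  have hQP : (N:ℝ)^(k-1) - ∏ j ∈ s, ((N:ℝ) - (j:ℝ)) ≤ C * (N:ℝ)^(k-2) := by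
    rw [hexp, hsplit]
    have : ∑ t ∈ s.powerset.erase ∅,
        -((∏ i ∈ t, (-(i:ℝ))) * (N:ℝ) ^ (s \ t).card) ≤
        ∑ t ∈ s.powerset.erase ∅, (∏ i ∈ t, (i:ℝ)) * (N:ℝ)^(k-2) :=
      Finset.sum_le_sum hrem
    rw [Finset.sum_neg_distrib] at this
    rw [← Finset.sum_mul, hCsum] at this
    linarith
  have hfrac : 1 - (∏ j ∈ s, ((N:ℝ) - (j:ℝ))) / (N:ℝ)^(k-1) =
      ((N:ℝ)^(k-1) - ∏ j ∈ s, ((N:ℝ) - (j:ℝ))) / (N:ℝ)^(k-1) := by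
    field_simp
  rw [hfrac, div_le_div_iff₀ hQpos hNpos]
  have hQ : (N:ℝ)^(k-1) = (N:ℝ)^(k-2) * (N:ℝ) := by
    rw [← pow_succ]
    congr 1
    omega
  calc ((N:ℝ)^(k-1) - ∏ j ∈ s, ((N:ℝ) - (j:ℝ))) * (N:ℝ)
      ≤ (C * (N:ℝ)^(k-2)) * (N:ℝ) := mul_le_mul_of_nonneg_right hQP hNpos.le
    _ = C * (N:ℝ)^(k-1) := by rw [hQ]; ring

/-- Cast of the falling factorial as a real product. -/
lemma cast_prod_Icc {k N : ℕ} (hk : 2 ≤ k) (hkN : k ≤ N) :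
    (N:ℝ) * ∏ j ∈ Icc 1 (k-1), ((N:ℝ) - (j:ℝ)) = (N.descFactorial k : ℝ) := by
  obtain ⟨m, rfl⟩ : ∃ m, k = m + 1 := ⟨k - 1, by omega⟩
  simp only [Nat.add_sub_cancel]
  rw [Nat.descFactorial_eq_prod_range]
  rw [Nat.cast_prod]
  have hcast : ∀ i ∈ range (m+1), ((N - i : ℕ) : ℝ) = (N:ℝ) - (i:ℝ) := by
    intro i hi
    rw [Nat.cast_sub (by have := mem_range.mp hi; omega)]
  rw [Finset.prod_congr rfl hcast]
  rw [Finset.prod_range_succ']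
  simp only [Nat.cast_zero, sub_zero]
  rw [mul_comm]
  congr 1
  rw [show Icc 1 m = Ico 1 (m+1) from (Finset.Ico_add_one_right_eq_Icc 1 m).symm,
    Finset.prod_Ico_eq_prod_range]
  simp only [Nat.add_sub_cancel]
  exact Finset.prod_congr rfl fun i _ => by rw [add_comm]

/-- Main real-valued inequality. -/
lemma key_real {k N : ℕ} (hk : 2 ≤ k) (hkN : k ≤ N) (g : (Fin k → Fin N) → ℝ)
    (hg : ∀ f, 0 ≤ g f) :
    (∏ j ∈ Icc 1 (k-1), ((N:ℝ) - (j:ℝ))) / (N:ℝ)^(k-1) *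
        ((N.factorial : ℝ)⁻¹ * ∑ σ : Equiv.Perm (Fin N), g (fun i => σ (Fin.castLE hkN i)))
      ≤ ((N:ℝ)^k)⁻¹ * ∑ f : Fin k → Fin N, g f := by
  have hNpos : (0:ℝ) < (N:ℝ) := by
    have : 0 < N := by omega
    exact_mod_cast this
  have hfacpos : (0:ℝ) < (N.factorial : ℝ) := by exact_mod_cast N.factorial_pos
  have hPnn : 0 ≤ ∏ j ∈ Icc 1 (k-1), ((N:ℝ) - (j:ℝ)) := by
    apply Finset.prod_nonneg
    intro j hj
    rw [mem_Icc] at hj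
    have : (j:ℝ) ≤ (N:ℝ) := by exact_mod_cast le_trans (le_trans hj.2 (Nat.sub_le k 1)) hkN
    linarith
  have hαnn : 0 ≤ (∏ j ∈ Icc 1 (k-1), ((N:ℝ) - (j:ℝ))) / (N:ℝ)^(k-1) :=
    div_nonneg hPnn (pow_nonneg hNpos.le _)
  have hsum := sum_perm_le hkN g hg
  have step1 : (∏ j ∈ Icc 1 (k-1), ((N:ℝ) - (j:ℝ))) / (N:ℝ)^(k-1) *
        ((N.factorial : ℝ)⁻¹ * ∑ σ : Equiv.Perm (Fin N), g (fun i => σ (Fin.castLE hkN i)))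
      ≤ (∏ j ∈ Icc 1 (k-1), ((N:ℝ) - (j:ℝ))) / (N:ℝ)^(k-1) *
        ((N.factorial : ℝ)⁻¹ * (((N - k).factorial : ℝ) * ∑ f : Fin k → Fin N, g f)) := by
    apply mul_le_mul_of_nonneg_left _ hαnn
    exact mul_le_mul_of_nonneg_left hsum (inv_nonneg.mpr hfacpos.le)
  refine le_trans step1 (le_of_eq ?_)
  have hfact : ((N - k).factorial : ℝ) * (N.descFactorial k : ℝ) = (N.factorial : ℝ) := by
    exact_mod_cast congrArg (Nat.cast : ℕ → ℝ) (Nat.factorial_mul_descFactorial hkN)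
  have hD := cast_prod_Icc hk hkN
  have hpk : (N:ℝ)^k = (N:ℝ)^(k-1) * (N:ℝ) := by
    rw [← pow_succ]
    congr 1
    omega
  rw [hpk]
  set T : ℝ := ∑ f : Fin k → Fin N, g f with hT
  field_simp
  linear_combination (T * (((N-k).factorial : ℝ))) * hD +
    T * hfact

end Aux


section MeasAux

open scoped Classical

variable [MeasurableSpace X]

lemma marginal_apply_real {k N : ℕ} (hkN : k ≤ N) (x : Fin N → X)
    {A : Set (Fin k → X)} (hA : MeasurableSet A) :
    ((marginal hkN (symmetrize N (Measure.dirac x))) A).toReal =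
      (N.factorial : ℝ)⁻¹ * ∑ σ : Equiv.Perm (Fin N),
        (if (fun i => x (σ (Fin.castLE hkN i))) ∈ A then (1:ℝ) else 0) := by
  have hproj : Measurable fun (y : Fin N → X) (i : Fin k) => y (Fin.castLE hkN i) :=
    measurable_pi_lambda _ fun i => measurable_pi_apply _
  have hperm : ∀ σ : Equiv.Perm (Fin N),
      Measurable fun (y : Fin N → X) (i : Fin N) => y (σ i) :=
    fun σ => measurable_pi_lambda _ fun i => measurable_pi_apply _
  have hennval : (marginal hkN (symmetrize N (Measure.dirac x))) A =
      (N.factorial : ℝ≥0∞)⁻¹ * ∑ σ : Equiv.Perm (Fin N),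
        (if (fun i => x (σ (Fin.castLE hkN i))) ∈ A then (1:ℝ≥0∞) else 0) := by
    rw [marginal, Measure.map_apply hproj hA, symmetrize, Measure.smul_apply,
      Measure.finset_sum_apply, smul_eq_mul]
    congr 1
    apply Finset.sum_congr rfl
    intro σ _
    rw [Measure.map_apply (hperm σ) (hproj hA),
      Measure.dirac_apply' _ ((hperm σ) (hproj hA)), Set.indicator_apply]
    simp only [Set.mem_preimage, Pi.one_apply]
  rw [hennval, ENNReal.toReal_mul, ENNReal.toReal_inv, ENNReal.toReal_natCast,
    ENNReal.toReal_sum (fun σ _ => by split <;> simp)]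
  congr 1
  apply Finset.sum_congr rfl
  intro σ _
  split <;> simp

lemma pi_empirical_apply_real {k N : ℕ} (hN : 0 < N) (x : Fin N → X)
    {A : Set (Fin k → X)} (hA : MeasurableSet A) :
    ((Measure.pi fun _ : Fin k => empirical N x) A).toReal =
      ((N:ℝ)^k)⁻¹ * ∑ f : Fin k → Fin N,
        (if (fun i => x (f i)) ∈ A then (1:ℝ) else 0) := by
  have hprob : IsProbabilityMeasure (empirical N x) := empirical_isProbabilityMeasure hN x
  have hpi : (Measure.pi fun _ : Fin k => empirical N x) =
      ((N:ℝ≥0∞)^k)⁻¹ • ∑ f : Fin k → Fin N, Measure.dirac (fun i => x (f i)) := by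
    apply Measure.pi_eq
    intro s hs
    rw [Measure.smul_apply, Measure.finset_sum_apply, smul_eq_mul]
    have hterm : ∀ f : Fin k → Fin N,
        Measure.dirac (fun i => x (f i)) (Set.pi Set.univ s) =
          ∏ i, (if x (f i) ∈ s i then (1:ℝ≥0∞) else 0) := by
      intro f
      rw [Measure.dirac_apply' _ (MeasurableSet.univ_pi hs), Set.indicator_apply]
      by_cases h : ∀ i, x (f i) ∈ s i
      · rw [if_pos (Set.mem_univ_pi.mpr h)]
        simp [h]
      · rw [if_neg (fun hc => h (Set.mem_univ_pi.mp hc))]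
        push_neg at h
        obtain ⟨i0, hi0⟩ := h
        have hz : (if x (f i0) ∈ s i0 then (1:ℝ≥0∞) else 0) = 0 := if_neg hi0
        exact (Finset.prod_eq_zero (Finset.mem_univ i0) hz).symm
    rw [Finset.sum_congr rfl (fun f _ => hterm f)]
    have hps := Finset.prod_univ_sum (fun _ : Fin k => (Finset.univ : Finset (Fin N)))
      (fun i j => if x j ∈ s i then (1:ℝ≥0∞) else 0)
    rw [Fintype.piFinset_univ] at hps
    rw [← hps]
    have hemp : ∀ i : Fin k, empirical N x (s i) =
        (N : ℝ≥0∞)⁻¹ * ∑ j : Fin N, (if x j ∈ s i then (1:ℝ≥0∞) else 0) := by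
      intro i
      rw [empirical, Measure.smul_apply, Measure.finset_sum_apply, smul_eq_mul]
      congr 1
      apply Finset.sum_congr rfl
      intro j _
      rw [Measure.dirac_apply' _ (hs i), Set.indicator_apply]
      simp
    rw [Finset.prod_congr rfl (fun i _ => hemp i), Finset.prod_mul_distrib,
      Finset.prod_const]
    simp [ENNReal.inv_pow]
  rw [hpi, Measure.smul_apply, Measure.finset_sum_apply, smul_eq_mul]
  have hterm : ∀ f : Fin k → Fin N,
      Measure.dirac (fun i => x (f i)) A = (if (fun i => x (f i)) ∈ A then (1:ℝ≥0∞) else 0) := by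
    intro f
    rw [Measure.dirac_apply' _ hA, Set.indicator_apply]
    simp
  rw [Finset.sum_congr rfl (fun f _ => hterm f)]
  rw [ENNReal.toReal_mul, ENNReal.toReal_inv, ENNReal.toReal_pow, ENNReal.toReal_natCast,
    ENNReal.toReal_sum (fun f _ => by split <;> simp)]
  congr 1
  apply Finset.sum_congr rfl
  intro f _
  split <;> simp

end MeasAux

/-- mean-field approximation of extreme points, total variation bound.
For `2 ≤ k ≤ N`, `μ_k = M_k S_N δ_{(x_1,…,x_N)}` and `λ = (1/N) ∑ δ_{x_i}`:
`‖(∏_{j=1}^{k−1}(N−j)/N^{k−1}) μ_k − λ^{⊗k}‖_TV ≤ C_k/N`, with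
`C_k = ∑_{j=1}^{k−1} c_j^{(k)}` and `c_j^{(k)} = ∑_{1≤i_1<⋯<i_j≤k−1} i_1⋯i_j`; the TV norm
is formalized as the supremum over Borel sets `A` of the discrepancy at `A`. -/
theorem tv_bound_mean_field
    {X : Type*} [MeasurableSpace X] [TopologicalSpace X] [PolishSpace X] [BorelSpace X]
    {k N : ℕ} (hk : 2 ≤ k) (hkN : k ≤ N) (x : Fin N → X) :
    ∀ A : Set (Fin k → X), MeasurableSet A →
      |(∏ j ∈ Finset.Icc 1 (k - 1), ((N : ℝ) - (j : ℝ))) / (N : ℝ) ^ (k - 1) *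
            ((marginal hkN (symmetrize N (Measure.dirac x))) A).toReal
          - ((Measure.pi fun _ : Fin k => empirical N x) A).toReal|
        ≤ (∑ j ∈ Finset.Icc 1 (k - 1),
            ∑ s ∈ Finset.powersetCard j (Finset.Icc 1 (k - 1)), ∏ i ∈ s, (i : ℝ)) / (N : ℝ) := by
  classical
  intro A hA
  have hN : 0 < N := by omega
  have hNfac : ((N.factorial : ℝ)) ≠ 0 := by exact_mod_cast N.factorial_ne_zero
  have hNR : (0:ℝ) < (N:ℝ) := by exact_mod_cast hN
  -- abbreviations
  set gA : (Fin k → Fin N) → ℝ := fun f => if (fun i => x (f i)) ∈ A then (1:ℝ) else 0 with hgA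
  set gC : (Fin k → Fin N) → ℝ := fun f => if (fun i => x (f i)) ∈ Aᶜ then (1:ℝ) else 0 with hgC
  have hgA0 : ∀ f, 0 ≤ gA f := fun f => by rw [hgA]; dsimp only; split <;> norm_num
  have hgC0 : ∀ f, 0 ≤ gC f := fun f => by rw [hgC]; dsimp only; split <;> norm_num
  have hA' := marginal_apply_real hkN x hA
  have hAc' := marginal_apply_real hkN x hA.compl
  have hB' := pi_empirical_apply_real hN x hA
  have hBc' := pi_empirical_apply_real hN x hA.compl
  rw [hA', hB']
  set α : ℝ := (∏ j ∈ Finset.Icc 1 (k - 1), ((N : ℝ) - (j : ℝ))) / (N : ℝ) ^ (k - 1) with hα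
  set C : ℝ := ∑ j ∈ Finset.Icc 1 (k - 1),
      ∑ s ∈ Finset.powersetCard j (Finset.Icc 1 (k - 1)), ∏ i ∈ s, (i : ℝ) with hCdef
  set a : ℝ := (N.factorial : ℝ)⁻¹ *
      ∑ σ : Equiv.Perm (Fin N), gA (fun i => σ (Fin.castLE hkN i)) with hadef
  set a' : ℝ := (N.factorial : ℝ)⁻¹ *
      ∑ σ : Equiv.Perm (Fin N), gC (fun i => σ (Fin.castLE hkN i)) with ha'def
  set b : ℝ := ((N:ℝ)^k)⁻¹ * ∑ f : Fin k → Fin N, gA f with hbdef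
  set b' : ℝ := ((N:ℝ)^k)⁻¹ * ∑ f : Fin k → Fin N, gC f with hb'def
  have h1 : α * a ≤ b := key_real hk hkN gA hgA0
  have h2 : α * a' ≤ b' := key_real hk hkN gC hgC0
  have hsum1 : a + a' = 1 := by
    rw [hadef, ha'def, ← mul_add, ← Finset.sum_add_distrib]
    have : ∀ σ : Equiv.Perm (Fin N),
        gA (fun i => σ (Fin.castLE hkN i)) + gC (fun i => σ (Fin.castLE hkN i)) = 1 := by
      intro σ
      rw [hgA, hgC]
      dsimp only
      by_cases h : (fun i => x (σ (Fin.castLE hkN i))) ∈ A <;> simp [h]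
    rw [Finset.sum_congr rfl fun σ _ => this σ, Finset.sum_const, Finset.card_univ,
      Fintype.card_perm, Fintype.card_fin, nsmul_eq_mul, mul_one, inv_mul_cancel₀ hNfac]
  have hsum2 : b + b' = 1 := by
    rw [hbdef, hb'def, ← mul_add, ← Finset.sum_add_distrib]
    have : ∀ f : Fin k → Fin N, gA f + gC f = 1 := by
      intro f
      rw [hgA, hgC]
      dsimp only
      by_cases h : (fun i => x (f i)) ∈ A <;> simp [h]
    rw [Finset.sum_congr rfl fun f _ => this f, Finset.sum_const, Finset.card_univ]
    have : Fintype.card (Fin k → Fin N) = N ^ k := by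
      rw [Fintype.card_fun, Fintype.card_fin, Fintype.card_fin]
    rw [this, nsmul_eq_mul, mul_one]
    rw [Nat.cast_pow]
    exact inv_mul_cancel₀ (by positivity)
  have h3 : α * a + α * a' = α := by rw [← mul_add, hsum1, mul_one]
  have hCb : 1 - α ≤ C / (N:ℝ) := prod_bound hk hkN
  have hC0 : 0 ≤ C / (N:ℝ) := by
    apply div_nonneg _ hNR.le
    rw [hCdef]
    apply Finset.sum_nonneg
    intro j _
    apply Finset.sum_nonneg
    intro t _
    exact Finset.prod_nonneg fun i _ => Nat.cast_nonneg i
  rw [abs_le]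
  constructor <;> linarith


end FiniteDeFinetti
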